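/- Let z_1, …, z_T be independent Bernoulli random variables with P(z_i = 1) = p_i ∈ [0,1], let Y = z_1 + … + z_T, and set p̄ = (p_1 + … + p_T)/T. If p̄ > 0, then E[1/(Y+1)] ≤ (1 − (1 − p̄)^{T+1}) / ((T+1) · p̄). -/

import Mathlib

open MeasureTheory ProbabilityTheory

lemma aux_integral_prod {Ω : Type*} [MeasurableSpace Ω] (μ : Measure Ω)
    [IsProbabilityMeasure μ] {ι : Type*}
    (g : ι → Ω → ℝ) (hindep : iIndepFun g μ)
    (hm : ∀ i, Measurable (g i)) (hnn : ∀ i, 0 ≤ g i) (s : Finset ι) :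
    ∫ ω, ∏ i ∈ s, g i ω ∂μ = ∏ i ∈ s, ∫ ω, g i ω ∂μ := by
  classical
  induction s using Finset.induction_on with
  | empty => simp
  | insert i s hi ih =>
    have e1 : (fun ω => ∏ j ∈ s, g j ω) = ∏ j ∈ s, g j := by ext ω; simp
    have e2 : (fun ω => g i ω * ∏ j ∈ s, g j ω) = g i * ∏ j ∈ s, g j := by ext ω; simp
    have hind : IndepFun (g i) (∏ j ∈ s, g j) μ :=
      (hindep.indepFun_finset_prod_of_notMem hm hi).symm
    have h := hind.integral_mul_eq_mul_integral
      (hm i).aestronglyMeasurable (e1 ▸ (Finset.measurable_prod s fun j _ => hm j).aestronglyMeasurable)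
    rw [Finset.prod_insert hi, ← ih]
    simp only [Finset.prod_insert hi]
    rw [e2, e1]
    exact h

lemma aux_expect {Ω : Type*} [MeasurableSpace Ω] (μ : Measure Ω) [IsFiniteMeasure μ]
    (Y : Ω → ℕ) (hY : Measurable Y) (N : ℕ) (hb : ∀ ω, Y ω < N) (h : ℕ → ℝ) :
    ∫ ω, h (Y ω) ∂μ = ∑ k ∈ Finset.range N, (μ {ω | Y ω = k}).toReal * h k := by
  classical
  have heq : ∀ ω, h (Y ω) = ∑ k ∈ Finset.range N,
      Set.indicator {ω | Y ω = k} (fun _ => h k) ω := by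
    intro ω
    rw [Finset.sum_eq_single (Y ω)]
    · exact (Set.indicator_of_mem rfl _).symm
    · intro k _ hk
      exact Set.indicator_of_notMem (fun h' => hk ((Set.mem_setOf_eq ▸ h').symm)) _
    · intro hn; exact absurd (Finset.mem_range.2 (hb ω)) hn
  simp_rw [heq]
  rw [integral_finset_sum]
  · refine Finset.sum_congr rfl fun k _ => ?_
    have hS : MeasurableSet {ω | Y ω = k} := hY (measurableSet_singleton k)
    rw [integral_indicator_const _ hS]
    simp [mul_comm, measureReal_def]
  · intro k _
    exact (integrable_const (h k)).indicator (hY (measurableSet_singleton k))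

/-- For independent Bernoulli random variables `z i` with parameters
`p i ∈ [0,1]`, `Y = ∑ i, z i` and `p̄ = (∑ i, p i)/T > 0`, the negative moment satisfies
`E[1/(Y+1)] ≤ (1 - (1 - p̄)^(T+1)) / ((T+1) p̄)`. -/
theorem negative_moment_le_of_indep_bernoulli
    {Ω : Type*} [MeasurableSpace Ω] (μ : Measure Ω) [IsProbabilityMeasure μ]
    (T : ℕ) (hT : 0 < T) (z : Fin T → Ω → ℕ) (p : Fin T → ℝ)
    (hmeas : ∀ i, Measurable (z i))
    (hval : ∀ i, ∀ ω, z i ω = 0 ∨ z i ω = 1)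
    (hp01 : ∀ i, p i ∈ Set.Icc (0 : ℝ) 1)
    (hp : ∀ i, μ {ω | z i ω = 1} = ENNReal.ofReal (p i))
    (hindep : iIndepFun z μ)
    (hpbar : 0 < (∑ i, p i) / T) :
    ∫ ω, (1 : ℝ) / ((∑ i, z i ω) + 1) ∂μ ≤
      (1 - (1 - (∑ i, p i) / T) ^ (T + 1)) / ((T + 1) * ((∑ i, p i) / T)) := by
  classical
  set pb : ℝ := (∑ i, p i) / T with hpbdef
  have hTpos : (0:ℝ) < T := Nat.cast_pos.2 hT
  set Y : Ω → ℕ := fun ω => ∑ i, z i ω with hYdef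
  have hYm : Measurable Y := Finset.measurable_sum Finset.univ fun i _ => hmeas i
  have hYb : ∀ ω, Y ω < T + 1 := by
    intro ω
    have : Y ω ≤ ∑ _i : Fin T, 1 := by
      refine Finset.sum_le_sum fun i _ => ?_
      rcases hval i ω with h | h <;> simp [h]
    simpa using Nat.lt_succ_of_le (by simpa using this)
  set m : ℕ → ℝ := fun k => (μ {ω | Y ω = k}).toReal with hmdef
  -- per-Bernoulli integral
  have hEi : ∀ (x : ℝ) (i : Fin T), ∫ ω, x ^ (z i ω) ∂μ = 1 - p i + p i * x := by
    intro x i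
    have hS : MeasurableSet {ω | z i ω = 1} := hmeas i (measurableSet_singleton 1)
    have hfe : (fun ω => x ^ (z i ω)) =
        fun ω => Set.indicator {ω | z i ω = 1} (fun _ => x - 1) ω + 1 := by
      ext ω
      rcases hval i ω with h | h <;>
        simp [Set.indicator_apply, Set.mem_setOf_eq, h]
    rw [hfe, integral_add ((integrable_const (x - 1)).indicator hS) (integrable_const 1),
      integral_indicator_const _ hS, integral_const, measureReal_def, measureReal_def, hp i,
      ENNReal.toReal_ofReal (hp01 i).1]
    simp
    ring
  -- product formula for E[x^Y], x ∈ [0,1]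
  have hX : ∀ x ∈ Set.Icc (0:ℝ) 1, ∫ ω, x ^ (Y ω) ∂μ = ∏ i, (1 - p i + p i * x) := by
    intro x hx
    have hind2 : iIndepFun
        (fun i ω => x ^ (z i ω)) μ :=
      hindep.comp (fun _ n => x ^ n) fun _ => measurable_from_nat
    have hgm : ∀ i : Fin T, Measurable fun ω => x ^ (z i ω) :=
      fun i => measurable_from_nat.comp (hmeas i)
    have hnn : ∀ i : Fin T, 0 ≤ (fun ω => x ^ (z i ω)) :=
      fun i ω => pow_nonneg hx.1 _
    have h := aux_integral_prod μ (fun i ω => x ^ (z i ω)) hind2 hgm hnn Finset.univ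
    simp_rw [Finset.prod_pow_eq_pow_sum] at h
    rw [hYdef]
    rw [h]
    exact Finset.prod_congr rfl fun i _ => hEi x i
  -- distribution formula for E[x^Y]
  have hsum_eq : ∀ x ∈ Set.Icc (0:ℝ) 1,
      ∑ k ∈ Finset.range (T+1), m k * x ^ k = ∏ i, (1 - p i + p i * x) := by
    intro x hx
    rw [← hX x hx, aux_expect μ Y hYm (T+1) hYb (fun k => x ^ k)]
  -- LHS as a sum
  have hL : ∫ ω, (1 : ℝ) / ((∑ i, z i ω) + 1) ∂μ
      = ∑ k ∈ Finset.range (T+1), m k * (1 / ((k:ℝ) + 1)) := by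
    rw [← aux_expect μ Y hYm (T+1) hYb (fun k => 1 / ((k:ℝ) + 1))]
  -- 1/(k+1) as an integral
  have hswap : ∑ k ∈ Finset.range (T+1), m k * (1 / ((k:ℝ) + 1))
      = ∫ x in (0:ℝ)..1, ∑ k ∈ Finset.range (T+1), m k * x ^ k := by
    rw [intervalIntegral.integral_finset_sum]
    · refine Finset.sum_congr rfl fun k _ => ?_
      rw [intervalIntegral.integral_const_mul, integral_pow]
      norm_num
    · intro k _
      exact ((continuous_const.mul (continuous_pow k)).intervalIntegrable 0 1)
  have hI1 : (∫ x in (0:ℝ)..1, ∑ k ∈ Finset.range (T+1), m k * x ^ k)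
      = ∫ x in (0:ℝ)..1, ∏ i, (1 - p i + p i * x) := by
    refine intervalIntegral.integral_congr fun x hx => ?_
    exact hsum_eq x (by rwa [Set.uIcc_of_le zero_le_one] at hx)
  -- pointwise AM-GM bound
  have ha : ∀ x ∈ Set.Icc (0:ℝ) 1, ∀ i : Fin T, 0 ≤ 1 - p i + p i * x := by
    intro x hx i
    have h1 := (hp01 i).1; have h2 := (hp01 i).2
    nlinarith [hx.1, hx.2]
  have hAM : ∀ x ∈ Set.Icc (0:ℝ) 1,
      ∏ i, (1 - p i + p i * x) ≤ (1 - (1 - x) * pb) ^ T := by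
    intro x hx
    have hw : ∑ _i : Fin T, (1/(T:ℝ)) = 1 := by
      rw [Finset.sum_const, Finset.card_univ, Fintype.card_fin, nsmul_eq_mul]
      field_simp
    have hgm := Real.geom_mean_le_arith_mean_weighted Finset.univ (fun _ => 1/(T:ℝ))
      (fun i => 1 - p i + p i * x) (fun _ _ => by positivity) hw (fun i _ => ha x hx i)
    have hsum : ∑ i, (1/(T:ℝ)) * (1 - p i + p i * x) = 1 - (1 - x) * pb := by
      rw [← Finset.mul_sum]
      have hs : ∑ i : Fin T, (1 - p i + p i * x) = T - (1 - x) * ∑ i, p i := by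
        rw [Finset.sum_add_distrib, Finset.sum_sub_distrib, ← Finset.sum_mul,
          Finset.sum_const, Finset.card_univ, Fintype.card_fin, nsmul_eq_mul, mul_one]
        ring
      rw [hs, hpbdef]
      field_simp
    rw [hsum] at hgm
    have hbase : ∀ i : Fin T, ((1 - p i + p i * x) ^ ((1:ℝ)/T)) ^ T = 1 - p i + p i * x := by
      intro i
      rw [← Real.rpow_natCast ((1 - p i + p i * x) ^ ((1:ℝ)/T)) T,
        ← Real.rpow_mul (ha x hx i), one_div, inv_mul_cancel₀ (ne_of_gt hTpos),
        Real.rpow_one]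
    calc ∏ i, (1 - p i + p i * x)
        = (∏ i, (1 - p i + p i * x) ^ ((1:ℝ)/(T:ℝ))) ^ T := by
          rw [← Finset.prod_pow]
          exact (Finset.prod_congr rfl fun i _ => hbase i).symm
      _ ≤ (1 - (1 - x) * pb) ^ T :=
          pow_le_pow_left₀ (Finset.prod_nonneg fun i _ => Real.rpow_nonneg (ha x hx i) _) hgm T
  -- monotonicity of integrals
  have hcont1 : Continuous fun x : ℝ => ∏ i, (1 - p i + p i * x) := by
    apply continuous_finset_prod
    intro i _
    fun_prop
  have hcont2 : Continuous fun x : ℝ => (1 - (1 - x) * pb) ^ T := by fun_prop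
  have hmono : (∫ x in (0:ℝ)..1, ∏ i, (1 - p i + p i * x))
      ≤ ∫ x in (0:ℝ)..1, (1 - (1 - x) * pb) ^ T :=
    intervalIntegral.integral_mono_on zero_le_one (hcont1.intervalIntegrable 0 1)
      (hcont2.intervalIntegrable 0 1) hAM
  -- compute the right-hand integral
  have hcomp := intervalIntegral.mul_integral_comp_mul_add (a := (0:ℝ)) (b := 1)
    (f := fun y : ℝ => y ^ T) (c := pb) (d := 1 - pb)
  rw [integral_pow] at hcomp
  have hb1 : pb * 0 + (1 - pb) = 1 - pb := by ring
  have hb2 : pb * 1 + (1 - pb) = 1 := by ring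
  rw [hb1, hb2] at hcomp
  have hIeq : (fun x : ℝ => (1 - (1 - x) * pb) ^ T) = fun x => (pb * x + (1 - pb)) ^ T := by
    ext x; ring_nf
  have hfin : (∫ x in (0:ℝ)..1, (1 - (1 - x) * pb) ^ T)
      = (1 - (1 - pb) ^ (T + 1)) / ((T + 1) * pb) := by
    rw [hIeq]
    have hpbne : pb ≠ 0 := ne_of_gt hpbar
    have hT1 : ((T:ℝ) + 1) ≠ 0 := by positivity
    field_simp at hcomp ⊢
    nlinarith [hcomp, one_pow (M := ℝ) (T + 1)]
  rw [hL, hswap, hI1]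
  calc (∫ x in (0:ℝ)..1, ∏ i, (1 - p i + p i * x))
      ≤ ∫ x in (0:ℝ)..1, (1 - (1 - x) * pb) ^ T := hmono
    _ = (1 - (1 - pb) ^ (T + 1)) / ((T + 1) * pb) := hfin
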